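/- Let n ≥ 1, let a_1,...,a_n be positive integers with s = Σ_i a_i, and let ε be a rational number with 0 < ε < 1/(2(n+1)). Let (G,w) be the ASHG with vertices v_1,...,v_n, x, y, x', y' and edges v_i x of weight a_i + ε and v_i y of weight −a_i for each i ∈ {1,...,n}, an edge x x' of weight 3s/2, an edge y y' of weight s/2, and an edge x y of weight s + ε. Let 𝒫 be the partition consisting of the parts {x,x'}, {y,y'}, and the singletons {v_i} for i ∈ {1,...,n}. Then 𝒫 admits a blocking coalition if and only if there exists A' ⊆ {1,...,n} with Σ_{i∈A'} a_i = s/2. -/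

import Mathlib

open Finset

noncomputable section
open scoped Classical

variable {V : Type*}

/-- The utility of agent `u` in the coalition `X`: the sum of the weights of the
edges joining `u` to members of `X`. -/
def ut (G : SimpleGraph V) (w : V → V → ℚ) (X : Finset V) (u : V) : ℚ :=
  ∑ v ∈ X.filter (fun v => G.Adj u v), w u v

/-- `P` encodes a partition of the vertex set: `P u` is the part containing `u`. -/
def IsPartitionFun (P : V → Finset V) : Prop :=
  (∀ u, u ∈ P u) ∧ ∀ u v, v ∈ P u → P v = P u

/-- `X` is a blocking coalition for the partition `P`. -/
def Blocking (G : SimpleGraph V) (w : V → V → ℚ) (P : V → Finset V)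
    (X : Finset V) : Prop :=
  X.Nonempty ∧ ∀ u ∈ X, ut G w (P u) u < ut G w X u

/-- The partition `P` is core stable: it admits no blocking coalition. -/
def CoreStable (G : SimpleGraph V) (w : V → V → ℚ) (P : V → Finset V) : Prop :=
  ∀ X : Finset V, ¬ Blocking G w P X

/-- The partition `P` is `k`-core stable: it admits no blocking coalition of size at most `k`. -/
def KCoreStable (k : ℕ) (G : SimpleGraph V) (w : V → V → ℚ) (P : V → Finset V) : Prop :=
  ∀ X : Finset V, X.card ≤ k → ¬ Blocking G w P X

/-- Weights of the Partition gadget: `Sum.inl i` is `v_i`, and `Sum.inr 0, 1, 2, 3`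
are `x, y, x', y'` respectively.  Non-edges get weight `0`. -/
def w9 {n : ℕ} (a : Fin n → ℤ) (s : ℤ) (ε : ℚ) :
    (Fin n ⊕ Fin 4) → (Fin n ⊕ Fin 4) → ℚ
  | Sum.inl i, Sum.inr j =>
      if j = 0 then (a i : ℚ) + ε else if j = 1 then -(a i : ℚ) else 0
  | Sum.inr j, Sum.inl i =>
      if j = 0 then (a i : ℚ) + ε else if j = 1 then -(a i : ℚ) else 0
  | Sum.inr j, Sum.inr j' =>
      if ({j, j'} : Finset (Fin 4)) = {0, 2} then 3 * (s : ℚ) / 2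
      else if ({j, j'} : Finset (Fin 4)) = {1, 3} then (s : ℚ) / 2
      else if ({j, j'} : Finset (Fin 4)) = {0, 1} then (s : ℚ) + ε
      else 0
  | Sum.inl _, Sum.inl _ => 0

/-- The partition `{x,x'}, {y,y'}`, singletons `{v_i}`. -/
def P9 {n : ℕ} : (Fin n ⊕ Fin 4) → Finset (Fin n ⊕ Fin 4)
  | Sum.inl i => {Sum.inl i}
  | Sum.inr j =>
      if j = 0 ∨ j = 2 then {Sum.inr 0, Sum.inr 2} else {Sum.inr 1, Sum.inr 3}


section Aux
variable {n : ℕ} (a : Fin n → ℤ) (s : ℤ) (ε : ℚ)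

lemma w9_self (u : Fin n ⊕ Fin 4) : w9 a s ε u u = 0 := by
  rcases u with i | j
  · rfl
  · show (if ({j, j} : Finset (Fin 4)) = {0, 2} then _ else _) = 0
    rw [if_neg (by revert j; decide), if_neg (by revert j; decide),
      if_neg (by revert j; decide)]

lemma w9_ne (u v : Fin n ⊕ Fin 4) (h : w9 a s ε u v ≠ 0) : u ≠ v := by
  rintro rfl; exact h (w9_self a s ε u)

lemma ut_eq (X : Finset (Fin n ⊕ Fin 4)) (u : Fin n ⊕ Fin 4) :
    ut (SimpleGraph.fromRel fun u v => w9 a s ε u v ≠ 0) (w9 a s ε) X u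
      = ∑ v ∈ X, w9 a s ε u v := by
  unfold ut
  apply @sum_filter_of_ne _ _ _ _ _ _ (_)
  intro v _ hv
  exact ⟨w9_ne a s ε u v hv, Or.inl hv⟩

lemma sum_w9 (X : Finset (Fin n ⊕ Fin 4)) (u : Fin n ⊕ Fin 4) :
    ∑ v ∈ X, w9 a s ε u v =
      (∑ i ∈ X.toLeft, w9 a s ε u (Sum.inl i)) + ∑ j ∈ X.toRight, w9 a s ε u (Sum.inr j) := by
  rw [← Finset.toLeft_disjSum_toRight (u := X), Finset.sum_disjSum,
    Finset.toLeft_disjSum_toRight]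


lemma sum_x (X : Finset (Fin n ⊕ Fin 4)) :
    ∑ v ∈ X, w9 a s ε (Sum.inr 0) v =
      (∑ i ∈ X.toLeft, (a i : ℚ)) + (X.toLeft.card : ℚ) * ε
        + ((if Sum.inr 1 ∈ X then (s : ℚ) + ε else 0)
          + (if Sum.inr 2 ∈ X then 3 * (s : ℚ) / 2 else 0)) := by
  rw [sum_w9]
  have h1 : ∀ i ∈ X.toLeft, w9 a s ε (Sum.inr 0) (Sum.inl i) = (a i : ℚ) + ε := by
    intro i _; simp [w9]
  have h2 : ∀ j ∈ X.toRight, w9 a s ε (Sum.inr 0) (Sum.inr j)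
      = (if j = 1 then (s : ℚ) + ε else 0) + (if j = 2 then 3 * (s : ℚ) / 2 else 0) := by
    intro j _; fin_cases j <;> simp (config := { decide := true }) [w9]
  rw [sum_congr rfl h1, sum_congr rfl h2, sum_add_distrib, sum_add_distrib, sum_const]
  simp [Finset.sum_ite_eq', Finset.mem_toRight, mul_comm]

lemma sum_y (X : Finset (Fin n ⊕ Fin 4)) :
    ∑ v ∈ X, w9 a s ε (Sum.inr 1) v =
      -(∑ i ∈ X.toLeft, (a i : ℚ))
        + ((if Sum.inr 0 ∈ X then (s : ℚ) + ε else 0)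
          + (if Sum.inr 3 ∈ X then (s : ℚ) / 2 else 0)) := by
  rw [sum_w9]
  have h1 : ∀ i ∈ X.toLeft, w9 a s ε (Sum.inr 1) (Sum.inl i) = -(a i : ℚ) := by
    intro i _; simp (config := { decide := true }) [w9]
  have h2 : ∀ j ∈ X.toRight, w9 a s ε (Sum.inr 1) (Sum.inr j)
      = (if j = 0 then (s : ℚ) + ε else 0) + (if j = 3 then (s : ℚ) / 2 else 0) := by
    intro j _; fin_cases j <;> simp (config := { decide := true }) [w9]
  rw [sum_congr rfl h1, sum_congr rfl h2, sum_add_distrib, sum_neg_distrib]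
  simp [Finset.sum_ite_eq', Finset.mem_toRight]

lemma sum_x' (X : Finset (Fin n ⊕ Fin 4)) :
    ∑ v ∈ X, w9 a s ε (Sum.inr 2) v =
      (if Sum.inr 0 ∈ X then 3 * (s : ℚ) / 2 else 0) := by
  rw [sum_w9]
  have h1 : ∀ i ∈ X.toLeft, w9 a s ε (Sum.inr 2) (Sum.inl i) = 0 := by
    intro i _; simp (config := { decide := true }) [w9]
  have h2 : ∀ j ∈ X.toRight, w9 a s ε (Sum.inr 2) (Sum.inr j)
      = (if j = 0 then 3 * (s : ℚ) / 2 else 0) := by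
    intro j _; fin_cases j <;> simp (config := { decide := true }) [w9]
  rw [sum_congr rfl h1, sum_congr rfl h2]
  simp [Finset.sum_ite_eq', Finset.mem_toRight]

lemma sum_y' (X : Finset (Fin n ⊕ Fin 4)) :
    ∑ v ∈ X, w9 a s ε (Sum.inr 3) v =
      (if Sum.inr 1 ∈ X then (s : ℚ) / 2 else 0) := by
  rw [sum_w9]
  have h1 : ∀ i ∈ X.toLeft, w9 a s ε (Sum.inr 3) (Sum.inl i) = 0 := by
    intro i _; simp (config := { decide := true }) [w9]
  have h2 : ∀ j ∈ X.toRight, w9 a s ε (Sum.inr 3) (Sum.inr j)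
      = (if j = 1 then (s : ℚ) / 2 else 0) := by
    intro j _; fin_cases j <;> simp (config := { decide := true }) [w9]
  rw [sum_congr rfl h1, sum_congr rfl h2]
  simp [Finset.sum_ite_eq', Finset.mem_toRight]

lemma sum_v (X : Finset (Fin n ⊕ Fin 4)) (i : Fin n) :
    ∑ v ∈ X, w9 a s ε (Sum.inl i) v =
      (if Sum.inr 0 ∈ X then (a i : ℚ) + ε else 0)
        + (if Sum.inr 1 ∈ X then -(a i : ℚ) else 0) := by
  rw [sum_w9]
  have h1 : ∀ i' ∈ X.toLeft, w9 a s ε (Sum.inl i) (Sum.inl i') = 0 := by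
    intro i' _; simp [w9]
  have h2 : ∀ j ∈ X.toRight, w9 a s ε (Sum.inl i) (Sum.inr j)
      = (if j = 0 then (a i : ℚ) + ε else 0) + (if j = 1 then -(a i : ℚ) else 0) := by
    intro j _; fin_cases j <;> simp (config := { decide := true }) [w9]
  rw [sum_congr rfl h1, sum_congr rfl h2]
  simp [Finset.sum_add_distrib, Finset.sum_ite_eq', Finset.mem_toRight]

lemma P9_x : (P9 (Sum.inr 0) : Finset (Fin n ⊕ Fin 4)) = {Sum.inr 0, Sum.inr 2} := by
  simp [P9]
lemma P9_y : (P9 (Sum.inr 1) : Finset (Fin n ⊕ Fin 4)) = {Sum.inr 1, Sum.inr 3} := by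
  simp (config := { decide := true }) [P9]
lemma P9_x' : (P9 (Sum.inr 2) : Finset (Fin n ⊕ Fin 4)) = {Sum.inr 0, Sum.inr 2} := by
  simp [P9]
lemma P9_y' : (P9 (Sum.inr 3) : Finset (Fin n ⊕ Fin 4)) = {Sum.inr 1, Sum.inr 3} := by
  simp (config := { decide := true }) [P9]

lemma utP_v (i : Fin n) :
    ∑ v ∈ (P9 (Sum.inl i) : Finset (Fin n ⊕ Fin 4)), w9 a s ε (Sum.inl i) v = 0 := by
  show ∑ v ∈ ({Sum.inl i} : Finset (Fin n ⊕ Fin 4)), w9 a s ε (Sum.inl i) v = 0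
  rw [sum_singleton, w9_self]

lemma utP_x :
    ∑ v ∈ (P9 (Sum.inr 0) : Finset (Fin n ⊕ Fin 4)), w9 a s ε (Sum.inr 0) v
      = 3 * (s : ℚ) / 2 := by
  rw [P9_x, sum_x]
  have hL : ({Sum.inr 0, Sum.inr 2} : Finset (Fin n ⊕ Fin 4)).toLeft = ∅ := by
    ext i; simp
  rw [hL]
  simp (config := { decide := true })

lemma utP_y :
    ∑ v ∈ (P9 (Sum.inr 1) : Finset (Fin n ⊕ Fin 4)), w9 a s ε (Sum.inr 1) v
      = (s : ℚ) / 2 := by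
  rw [P9_y, sum_y]
  have hL : ({Sum.inr 1, Sum.inr 3} : Finset (Fin n ⊕ Fin 4)).toLeft = ∅ := by
    ext i; simp
  rw [hL]
  simp (config := { decide := true })

lemma utP_x' :
    ∑ v ∈ (P9 (Sum.inr 2) : Finset (Fin n ⊕ Fin 4)), w9 a s ε (Sum.inr 2) v
      = 3 * (s : ℚ) / 2 := by
  rw [P9_x', sum_x']
  simp (config := { decide := true })

lemma utP_y' :
    ∑ v ∈ (P9 (Sum.inr 3) : Finset (Fin n ⊕ Fin 4)), w9 a s ε (Sum.inr 3) v
      = (s : ℚ) / 2 := by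
  rw [P9_y', sum_y']
  simp (config := { decide := true })

end Aux

/-- the Partition gadget admits a blocking coalition iff the numbers
`a_1, …, a_n` can be split into two halves of equal sum. -/
theorem partition_gadget_blocking_iff (n : ℕ) (hn : 1 ≤ n)
    (a : Fin n → ℤ) (ha : ∀ i, 0 < a i) (s : ℤ) (hs : s = ∑ i, a i)
    (ε : ℚ) (hε0 : 0 < ε) (hε1 : ε < 1 / (2 * (n + 1))) :
    (∃ X : Finset (Fin n ⊕ Fin 4),
        Blocking (SimpleGraph.fromRel fun u v => w9 a s ε u v ≠ 0) (w9 a s ε) P9 X)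
      ↔ ∃ A' : Finset (Fin n), 2 * ∑ i ∈ A', a i = s := by
  -- Basic facts
  have hs1 : 1 ≤ s := by
    have : 0 < ∑ i, a i := by
      apply Finset.sum_pos (fun i _ => ha i)
      have : Nonempty (Fin n) := ⟨⟨0, hn⟩⟩
      exact univ_nonempty
    omega
  have hsQ : (1 : ℚ) ≤ (s : ℚ) := by exact_mod_cast hs1
  have hε12 : (n + 1 : ℚ) * ε < 1 / 2 := by
    have hpos : (0 : ℚ) < 2 * (n + 1) := by positivity
    have h2 : ε * (2 * (n + 1)) < 1 := (lt_div_iff₀ hpos).mp hε1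
    nlinarith
  have hTle : ∀ B : Finset (Fin n), ∑ i ∈ B, (a i : ℚ) ≤ (s : ℚ) := by
    intro B
    have h1 : ∑ i ∈ B, (a i : ℚ) ≤ ∑ i, (a i : ℚ) := by
      apply sum_le_sum_of_subset_of_nonneg (subset_univ B)
      intro i _ _
      exact_mod_cast (ha i).le
    have h2 : ((s : ℤ) : ℚ) = ∑ i, (a i : ℚ) := by rw [hs]; push_cast; ring
    linarith
  have hT0 : ∀ B : Finset (Fin n), (0 : ℚ) ≤ ∑ i ∈ B, (a i : ℚ) := by
    intro B
    apply sum_nonneg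
    intro i _
    exact_mod_cast (ha i).le
  have hcard : ∀ B : Finset (Fin n), ((B.card : ℚ) + 1) * ε ≤ (n + 1 : ℚ) * ε := by
    intro B
    apply mul_le_mul_of_nonneg_right _ hε0.le
    have : B.card ≤ n := by simpa using card_le_univ B
    have : (B.card : ℚ) ≤ n := by exact_mod_cast this
    linarith
  constructor
  · rintro ⟨X, hXne, hXb⟩
    have hXb' : ∀ u ∈ X, ∑ v ∈ P9 u, w9 a s ε u v < ∑ v ∈ X, w9 a s ε u v := by
      intro u hu
      have := hXb u hu
      rwa [ut_eq, ut_eq] at this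
    set T := ∑ i ∈ X.toLeft, (a i : ℚ) with hTdef
    -- x' ∉ X
    have hx' : Sum.inr 2 ∉ X := by
      intro h
      have h1 := hXb' _ h
      rw [utP_x', sum_x'] at h1
      split_ifs at h1 <;> linarith
    -- y' ∉ X
    have hy' : Sum.inr 3 ∉ X := by
      intro h
      have h1 := hXb' _ h
      rw [utP_y', sum_y'] at h1
      split_ifs at h1 <;> linarith
    -- x ∈ X
    have hx : Sum.inr 0 ∈ X := by
      by_contra h0
      obtain ⟨u, hu⟩ := hXne
      rcases u with i | j
      · have h1 := hXb' _ hu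
        rw [utP_v, sum_v, if_neg h0] at h1
        have : (0 : ℚ) < (a i : ℚ) := by exact_mod_cast ha i
        split_ifs at h1 <;> linarith
      · rcases (by decide : ∀ j : Fin 4, j = 0 ∨ j = 1 ∨ j = 2 ∨ j = 3) j with
          rfl | rfl | rfl | rfl
        · exact h0 hu
        · have h1 := hXb' _ hu
          rw [utP_y, sum_y, if_neg h0, if_neg hy'] at h1
          have := hT0 X.toLeft
          linarith
        · exact hx' hu
        · exact hy' hu
    -- y ∈ X
    have hy : Sum.inr 1 ∈ X := by
      by_contra h1
      have h2 := hXb' _ hx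
      rw [utP_x, sum_x, if_neg h1, if_neg hx'] at h2
      have h3 := hTle X.toLeft
      have h4 := hcard X.toLeft
      have h5 : (X.toLeft.card : ℚ) * ε ≤ (n + 1 : ℚ) * ε := by
        have := hcard X.toLeft
        nlinarith [hε0.le]
      linarith
    -- the two inequalities
    have hbx := hXb' _ hx
    rw [utP_x, sum_x, if_pos hy, if_neg hx'] at hbx
    have hby := hXb' _ hy
    rw [utP_y, sum_y, if_pos hx, if_neg hy'] at hby
    -- derive s/2 - 1/2 < T < s/2 + 1/2
    have hk := hcard X.toLeft
    have hup : T < (s : ℚ) / 2 + 1 / 2 := by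
      have : ε < 1 / 2 := by nlinarith [hε0.le]
      linarith
    have hlo : (s : ℚ) / 2 - 1 / 2 < T := by nlinarith [hε0.le]
    refine ⟨X.toLeft, ?_⟩
    have hcast : ((2 * ∑ i ∈ X.toLeft, a i - s : ℤ) : ℚ) = 2 * T - (s : ℚ) := by
      push_cast [hTdef]; ring
    have hlt1 : ((2 * ∑ i ∈ X.toLeft, a i - s : ℤ) : ℚ) < 1 := by rw [hcast]; linarith
    have hgt1 : (-1 : ℚ) < ((2 * ∑ i ∈ X.toLeft, a i - s : ℤ) : ℚ) := by
      rw [hcast]; linarith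
    have h1 : (2 * ∑ i ∈ X.toLeft, a i - s : ℤ) < 1 := by exact_mod_cast hlt1
    have h2 : (-1 : ℤ) < (2 * ∑ i ∈ X.toLeft, a i - s : ℤ) := by exact_mod_cast hgt1
    omega
  · rintro ⟨A', hA'⟩
    set X : Finset (Fin n ⊕ Fin 4) :=
      (A'.image Sum.inl) ∪ {Sum.inr 0, Sum.inr 1} with hXdef
    have hx : Sum.inr 0 ∈ X := by simp [hXdef]
    have hy : Sum.inr 1 ∈ X := by simp [hXdef]
    have hx' : Sum.inr 2 ∉ X := by simp (config := { decide := true }) [hXdef]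
    have hy' : Sum.inr 3 ∉ X := by simp (config := { decide := true }) [hXdef]
    have hL : X.toLeft = A' := by
      ext i; simp [hXdef]
    have hT : ∑ i ∈ X.toLeft, (a i : ℚ) = (s : ℚ) / 2 := by
      rw [hL]
      have : ((2 * ∑ i ∈ A', a i : ℤ) : ℚ) = ((s : ℤ) : ℚ) := by exact_mod_cast hA'
      push_cast at this
      linarith
    refine ⟨X, ⟨Sum.inr 0, hx⟩, ?_⟩
    intro u hu
    rw [ut_eq, ut_eq]
    rcases u with i | j
    · have hi : i ∈ A' := by
        have := hu
        simp (config := { decide := true }) [hXdef] at this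
        exact this
      rw [utP_v, sum_v, if_pos hx, if_pos hy]
      linarith
    · rcases (by decide : ∀ j : Fin 4, j = 0 ∨ j = 1 ∨ j = 2 ∨ j = 3) j with
        rfl | rfl | rfl | rfl
      · rw [utP_x, sum_x, if_pos hy, if_neg hx', hT]
        have h0 : (0 : ℚ) ≤ (X.toLeft.card : ℚ) := by positivity
        nlinarith [hε0]
      · rw [utP_y, sum_y, if_pos hx, if_neg hy', hT]
        linarith
      · exact absurd hu hx'
      · exact absurd hu hy'
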